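/- The Dirichlet energy of the ground state soliton equals ∫_{ℝ³} |∇W(x)|² dx = 3√3·π²/4. -/

import Mathlib

open MeasureTheory Real Filter
open Topology

noncomputable section

/-- ℝ³ as a Euclidean space. -/
abbrev E3 := EuclideanSpace ℝ (Fin 3)

/-- The ground state soliton `W(x) = √3 (1 + 3|x|²)^(-1/2)`. -/
def W (x : E3) : ℝ := Real.sqrt 3 * (1 + 3 * ‖x‖ ^ 2) ^ (-(1 / 2) : ℝ)


lemma grad_W (x : E3) :
    HasGradientAt W ((-3 * Real.sqrt 3 * (1 + 3 * ‖x‖ ^ 2) ^ (-(3/2) : ℝ)) • x) x := by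
  have h1 : (0:ℝ) < 1 + 3 * ‖x‖ ^ 2 := by positivity
  have ht : HasDerivAt (fun t : ℝ => 1 + 3 * t) 3 (‖x‖^2) := by
    simpa using ((hasDerivAt_id (‖x‖^2)).const_mul (3:ℝ)).const_add 1
  have hf : HasDerivAt (fun t : ℝ => Real.sqrt 3 * (1 + 3 * t) ^ (-(1/2) : ℝ))
      (Real.sqrt 3 * ((-(1/2) : ℝ) * (1 + 3 * ‖x‖^2) ^ (-(1/2) - 1 : ℝ) * 3)) (‖x‖^2) := by
    have h := (Real.hasDerivAt_rpow_const (x := 1 + 3*‖x‖^2) (p := (-(1/2):ℝ))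
      (Or.inl h1.ne')).comp (‖x‖^2) ht
    simpa [mul_comm, mul_assoc] using h.const_mul (Real.sqrt 3)
  have hq : HasFDerivAt (fun y : E3 => ‖y‖ ^ 2) (2 • (innerSL ℝ x)) x := by
    simpa using (hasFDerivAt_id x).norm_sq
  have hcomp := hf.comp_hasFDerivAt x hq
  rw [hasGradientAt_iff_hasFDerivAt]
  refine HasFDerivAt.congr_fderiv hcomp ?_
  ext y
  simp only [InnerProductSpace.toDual_apply_apply, ContinuousLinearMap.coe_smul',
    Pi.smul_apply, ContinuousLinearMap.smul_apply, innerSL_apply_apply, smul_eq_mul,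
    real_inner_smul_left]
  have : (-(1/2) - 1 : ℝ) = (-(3/2) : ℝ) := by norm_num
  rw [this]
  ring


lemma norm_grad_sq (x : E3) :
    ‖gradient W x‖ ^ 2 = 27 * ‖x‖ ^ 2 * ((1 + 3 * ‖x‖ ^ 2) ^ 3)⁻¹ := by
  have h1 : (0:ℝ) < 1 + 3 * ‖x‖ ^ 2 := by positivity
  rw [(grad_W x).gradient, norm_smul, mul_pow, norm_mul, norm_mul]
  have h2 : |(1 + 3 * ‖x‖ ^ 2) ^ (-(3/2) : ℝ)| = (1 + 3 * ‖x‖ ^ 2) ^ (-(3/2) : ℝ) :=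
    abs_of_nonneg (Real.rpow_nonneg h1.le _)
  have h3 : ((1 + 3 * ‖x‖ ^ 2) ^ (-(3/2) : ℝ)) ^ 2 = ((1 + 3 * ‖x‖ ^ 2) ^ 3)⁻¹ := by
    rw [← Real.rpow_natCast ((1 + 3 * ‖x‖ ^ 2) ^ (-(3/2) : ℝ)) 2, ← Real.rpow_mul h1.le,
      show ((-(3/2):ℝ)*(2:ℕ)) = -(3:ℕ) by push_cast; norm_num, Real.rpow_neg h1.le,
      Real.rpow_natCast]
  simp only [Real.norm_eq_abs, h2]
  rw [abs_of_nonpos (by norm_num : (-3:ℝ) ≤ 0), abs_of_nonneg (Real.sqrt_nonneg 3)]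
  have h4 : Real.sqrt 3 ^ 2 = 3 := Real.sq_sqrt (by norm_num)
  rw [mul_pow, mul_pow, h3, h4]
  ring

lemma integrable_grad : Integrable (fun x : E3 => ‖gradient W x‖ ^ 2) := by
  simp only [norm_grad_sq]
  have h4 : ((Module.finrank ℝ E3 : ℝ)) < 4 := by
    simp [finrank_euclideanSpace]; norm_num
  refine ((integrable_one_add_norm (E := E3) (r := 4) h4).const_mul 216).mono' ?_ ?_
  · apply Continuous.aestronglyMeasurable
    fun_prop (disch := intro x; positivity)
  · filter_upwards with x
    have ht : (0:ℝ) ≤ ‖x‖ := norm_nonneg x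
    set t : ℝ := ‖x‖ with hts
    have h1 : (0:ℝ) < 1 + 3 * t ^ 2 := by positivity
    have h5 : (1 + t) ^ ((-4:ℝ)) = ((1+t)^(4:ℕ))⁻¹ := by
      rw [show ((-4:ℝ)) = -(4:ℕ) by norm_num, Real.rpow_neg (by positivity), Real.rpow_natCast]
    rw [Real.norm_eq_abs, abs_of_nonneg (by positivity), h5]
    calc 27 * t^2 * ((1+3*t^2)^3)⁻¹ = 27*t^2/(1+3*t^2)^3 := by ring
      _ ≤ 216/(1+t)^4 := by
          rw [div_le_div_iff₀ (by positivity) (by positivity)]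
          nlinarith [sq_nonneg (t - t^2), sq_nonneg (t^2 - t^3), sq_nonneg t, sq_nonneg (1-t),
            pow_nonneg ht 3, pow_nonneg ht 5, pow_nonneg ht 6]
      _ = 216*((1+t)^4)⁻¹ := by ring


def g (r : ℝ) : ℝ := (3*Real.sqrt 3/8)*Real.arctan (Real.sqrt 3*r)
  - (15/8)*(r/(1+3*r^2)) + (3/4)*(r/(1+3*r^2)^2)

lemma g_deriv (r : ℝ) :
    HasDerivAt g (r^2 • (27*r^2*((1+3*r^2)^3)⁻¹)) r := by
  have h1 : (0:ℝ) < 1 + 3 * r ^ 2 := by positivity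
  have hu : HasDerivAt (fun r : ℝ => Real.sqrt 3 * r) (Real.sqrt 3) r := by
    simpa using (hasDerivAt_id r).const_mul (Real.sqrt 3)
  have h3 : Real.sqrt 3 * Real.sqrt 3 = 3 := Real.mul_self_sqrt (by norm_num)
  have h2 : 1 + (Real.sqrt 3 * r)^2 = 1 + 3*r^2 := by rw [mul_pow, sq, h3]
  have harc : HasDerivAt (fun x : ℝ => Real.arctan (Real.sqrt 3 * x))
      (1 / (1 + 3*r^2) * Real.sqrt 3) r := by
    have := hu.arctan
    rwa [h2] at this
  have hden : HasDerivAt (fun r : ℝ => 1 + 3 * r ^ 2) (6 * r) r := by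
    have h := ((hasDerivAt_pow 2 r).const_mul (3:ℝ)).const_add 1
    norm_num at h
    exact (h.const_add 1).congr_deriv (by ring)
  have hdiv1 : HasDerivAt (fun r : ℝ => r / (1 + 3 * r ^ 2))
      ((1 * (1 + 3*r^2) - r * (6*r)) / (1 + 3*r^2)^2) r :=
    (hasDerivAt_id r).div hden h1.ne'
  have hden2 : HasDerivAt (fun r : ℝ => (1 + 3 * r ^ 2)^2) (2 * (1+3*r^2)^1 * (6*r)) r := by
    simpa using hden.fun_pow 2
  have hdiv2 : HasDerivAt (fun r : ℝ => r / (1 + 3 * r ^ 2)^2)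
      ((1 * (1 + 3*r^2)^2 - r * (2 * (1+3*r^2)^1 * (6*r))) / ((1 + 3*r^2)^2)^2) r :=
    (hasDerivAt_id r).div hden2 (by positivity)
  have H := ((harc.const_mul (3*Real.sqrt 3/8)).sub
      (hdiv1.const_mul ((15:ℝ)/8))).add (hdiv2.const_mul ((3:ℝ)/4))
  refine H.congr_deriv ?_
  have key : (3*Real.sqrt 3/8) * (1/(1+3*r^2) * Real.sqrt 3) = 9/(8*(1+3*r^2)) := by
    field_simp
    linear_combination 3 * h3
  rw [key, smul_eq_mul]
  field_simp [h1.ne']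
  ring

lemma g_tendsto : Tendsto g atTop (𝓝 (3*Real.sqrt 3*Real.pi/16)) := by
  have harc : Tendsto (fun r : ℝ => Real.arctan (Real.sqrt 3 * r)) atTop (𝓝 (Real.pi/2)) :=
    (Real.tendsto_arctan_atTop.mono_right nhdsWithin_le_nhds).comp
      (tendsto_id.const_mul_atTop (by positivity))
  have hb : Tendsto (fun r : ℝ => r⁻¹ + 3 * r) atTop atTop :=
    tendsto_inv_atTop_zero.add_atTop (tendsto_id.const_mul_atTop (by norm_num))
  have t1 : Tendsto (fun r : ℝ => r / (1 + 3 * r ^ 2)) atTop (𝓝 0) := by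
    refine hb.inv_tendsto_atTop.congr' ?_
    filter_upwards [eventually_ge_atTop (1:ℝ)] with r hr
    have hr0 : r ≠ 0 := by linarith
    have e : r⁻¹ + 3*r = (1+3*r^2)/r := by field_simp
    simp only [Pi.inv_apply]
    rw [e, inv_div]
  have t2 : Tendsto (fun r : ℝ => (1 + 3 * r ^ 2)⁻¹) atTop (𝓝 0) := by
    refine Tendsto.inv_tendsto_atTop ?_
    refine tendsto_atTop_add_const_left _ 1 ?_
    exact (tendsto_pow_atTop (by norm_num)).const_mul_atTop (by norm_num)
  have t3 : Tendsto (fun r : ℝ => r / (1 + 3 * r ^ 2)^2) atTop (𝓝 0) := by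
    have := t1.mul t2
    simp only [mul_zero] at this
    refine this.congr fun r => ?_
    rw [pow_two (1+3*r^2), div_mul_eq_div_div, div_eq_mul_inv, div_eq_mul_inv]
  have H := ((harc.const_mul (3*Real.sqrt 3/8)).sub
      (t1.const_mul ((15:ℝ)/8))).add (t3.const_mul ((3:ℝ)/4))
  simp only [mul_zero] at H
  convert H using 2
  · rfl
  ring

lemma integral1d :
    IntegrableOn (fun y : ℝ => y^2 • (27*y^2*((1+3*y^2)^3)⁻¹)) (Set.Ioi 0) ∧
    ∫ y in Set.Ioi (0:ℝ), y^2 • (27*y^2*((1+3*y^2)^3)⁻¹) = 3*Real.sqrt 3*Real.pi/16 := by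
  have hderiv : ∀ y ∈ Set.Ici (0:ℝ), HasDerivAt g (y^2 • (27*y^2*((1+3*y^2)^3)⁻¹)) y :=
    fun y _ => g_deriv y
  have hpos : ∀ y ∈ Set.Ioi (0:ℝ), 0 ≤ y^2 • (27*y^2*((1+3*y^2)^3)⁻¹) := by
    intro y _; have : (0:ℝ) < 1+3*y^2 := by positivity
    simp only [smul_eq_mul]; positivity
  constructor
  · exact integrableOn_Ioi_deriv_of_nonneg' hderiv hpos g_tendsto
  · rw [integral_Ioi_of_hasDerivAt_of_nonneg' hderiv hpos g_tendsto]
    simp [g]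

/-- The Dirichlet energy of the ground state: `∫ |∇W|² = 3√3 π²/4`. -/
theorem stmt8 :
    Integrable (fun x : E3 => ‖gradient W x‖ ^ 2) ∧
    ∫ x : E3, ‖gradient W x‖ ^ 2 = 3 * Real.sqrt 3 * Real.pi ^ 2 / 4 := by
  refine ⟨integrable_grad, ?_⟩
  have hdim : Module.finrank ℝ E3 = 3 := by simp [finrank_euclideanSpace]
  have hint := MeasureTheory.integral_fun_norm_addHaar (volume : Measure E3)
    (fun r : ℝ => 27 * r ^ 2 * ((1 + 3 * r ^ 2) ^ 3)⁻¹)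
  rw [hdim] at hint
  have h1 : ∫ x : E3, ‖gradient W x‖ ^ 2
      = ∫ x : E3, 27 * ‖x‖ ^ 2 * ((1 + 3 * ‖x‖ ^ 2) ^ 3)⁻¹ := by
    simp only [norm_grad_sq]
  rw [h1, hint, integral1d.2]
  have hvol : (volume (Metric.ball (0:E3) 1)).toReal = 4 * Real.pi / 3 := by
    rw [EuclideanSpace.volume_ball]
    have hcard : (Fintype.card (Fin 3)) = 3 := by simp
    rw [hcard]
    have hg : Real.Gamma ((3:ℝ) / 2 + 1) = 3 * Real.sqrt Real.pi / 4 := by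
      rw [Real.Gamma_add_one (by norm_num)]
      have : (3:ℝ)/2 = 1/2 + 1 := by norm_num
      rw [this, Real.Gamma_add_one (by norm_num), Real.Gamma_one_half_eq]
      ring
    have hs : Real.sqrt Real.pi ^ 3 = Real.pi * Real.sqrt Real.pi := by
      rw [pow_succ, Real.sq_sqrt Real.pi_nonneg]
    have hps : Real.sqrt Real.pi ≠ 0 := by
      positivity
    have : Real.sqrt Real.pi ^ 3 / Real.Gamma ((3:ℝ)/2 + 1) = 4 * Real.pi / 3 := by
      rw [hg, hs]
      field_simp
    push_cast
    rw [this]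
    simp [ENNReal.toReal_ofReal (by positivity : (0:ℝ) ≤ 4 * Real.pi / 3)]
  rw [measureReal_def, hvol]
  rw [nsmul_eq_mul, smul_eq_mul]
  push_cast
  ring


end
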